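/- If P is a simple rank-3 matroid with an element e such that the deletion P \ e is isomorphic to the projective plane PG(2,q) over the finite field GF(q), then P has a U_{2,q^2+1}-minor (a rank-2 uniform minor on q^2+1 elements). -/

import Mathlib

open Set Matroid

namespace Paper

variable {α : Type*}

/-- The deletion `M \ D`. -/
def del (M : Matroid α) (D : Set α) : Matroid α := M ↾ (M.E \ D)

/-- The contraction `M / C`. -/
def contr (M : Matroid α) (C : Set α) : Matroid α := (M✶ ↾ (M.E \ C))✶

/-- `N` is a minor of `M`. -/
def IsMinorOf (N M : Matroid α) : Prop := ∃ C D : Set α, N = del (contr M C) D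

/-- Rank of a set: the maximum size of an independent subset. -/
noncomputable def rk (M : Matroid α) (X : Set α) : ℕ :=
  sSup {n | ∃ I, M.Indep I ∧ I ⊆ X ∧ I.ncard = n}

/-- The rank of a matroid. -/
noncomputable def rank (M : Matroid α) : ℕ := rk M M.E

/-- The connectivity function `λ_M(X) = r(X) + r(E \ X) - r(M)`. -/
noncomputable def conn (M : Matroid α) (X : Set α) : ℤ :=
  (rk M X : ℤ) + (rk M (M.E \ X) : ℤ) - (rank M : ℤ)

/-- Local connectivity `⊓_M(S,T) = r(S) + r(T) - r(S ∪ T)`. -/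
noncomputable def localConn (M : Matroid α) (S T : Set α) : ℤ :=
  (rk M S : ℤ) + (rk M T : ℤ) - (rk M (S ∪ T) : ℤ)

/-- `κ_M(S,T) = min { λ_M(A) : S ⊆ A ⊆ E \ T }`. -/
noncomputable def kappa (M : Matroid α) (S T : Set α) : ℤ :=
  sInf {k : ℤ | ∃ A, S ⊆ A ∧ A ⊆ M.E \ T ∧ conn M A = k}

/-- Two sets are skew if their local connectivity is zero. -/
def SkewSets (M : Matroid α) (S T : Set α) : Prop := localConn M S T = 0

/-- A circuit is a minimal dependent set. -/
def Circuit (M : Matroid α) (C : Set α) : Prop := M.Dep C ∧ ∀ C' ⊂ C, ¬ M.Dep C'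

/-- A cocircuit is a circuit of the dual. -/
def Cocircuit (M : Matroid α) (C : Set α) : Prop := Circuit M✶ C

/-- A matroid is connected if any two elements lie in a common circuit. -/
def Connected (M : Matroid α) : Prop :=
  M.E.Nonempty ∧ ∀ e ∈ M.E, ∀ f ∈ M.E, e = f ∨ ∃ C, Circuit M C ∧ e ∈ C ∧ f ∈ C

/-- `M` is 3-connected: connected with no 2-separation. -/
def ThreeConnected (M : Matroid α) : Prop :=
  Connected M ∧ ∀ X ⊆ M.E, 2 ≤ X.ncard → 2 ≤ (M.E \ X).ncard → 2 ≤ conn M X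

/-- A matroid is simple if every set of at most two elements is independent. -/
def Simple (M : Matroid α) : Prop := ∀ X ⊆ M.E, X.ncard ≤ 2 → M.Indep X

/-- `φ` is an `F`-representation of `M`: independence equals linear independence. -/
def IsRepBy (M : Matroid α) (F : Type*) [Field F] {W : Type*} [AddCommGroup W]
    [Module F W] (φ : α → W) : Prop :=
  ∀ I ⊆ M.E, (M.Indep I ↔ LinearIndependent F (fun e : I => φ e.1))

/-- `M` is representable over the field `F`. -/
def Representable (M : Matroid α) (F : Type*) [Field F] : Prop :=
  ∃ (n : ℕ) (φ : α → (Fin n → F)), IsRepBy M F φ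

/-- `M` is (isomorphic to) the uniform matroid `U_{r,k}`. -/
def IsUniform (M : Matroid α) (r k : ℕ) : Prop :=
  M.E.Finite ∧ M.E.ncard = k ∧ ∀ I ⊆ M.E, (M.Indep I ↔ I.ncard ≤ r)

/-- `M` has a `U_{r,k}`-minor. -/
def HasUniformMinor (M : Matroid α) (r k : ℕ) : Prop :=
  ∃ N, IsMinorOf N M ∧ IsUniform N r k

/-- `M` is isomorphic to the projective geometry `PG(n-1, |F|)`: it has an
`F`-representation by pairwise non-parallel nonzero vectors of `F^n` meeting
every one-dimensional subspace. -/
def IsProjGeom (M : Matroid α) (n : ℕ) (F : Type*) [Field F] : Prop :=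
  ∃ φ : α → (Fin n → F),
    IsRepBy M F φ ∧ (∀ e ∈ M.E, φ e ≠ 0) ∧
    (∀ e ∈ M.E, ∀ f ∈ M.E, e ≠ f → ∀ c : F, φ f ≠ c • φ e) ∧
    (∀ v : Fin n → F, v ≠ 0 → ∃ e ∈ M.E, ∃ c : F, v = c • φ e)

/-- `M` has a `PG(n-1, |F|)`-minor. -/
def HasProjGeomMinor (M : Matroid α) (n : ℕ) (F : Type*) [Field F] : Prop :=
  ∃ N, IsMinorOf N M ∧ IsProjGeom N n F

/-- If `P` is a simple rank-3 matroid with an element `e` such that `P \ e ≅ PG(2,q)`,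
then `P` has a `U_{2,q²+1}`-minor. -/
lemma card_ne_zero_subtype (β : Type*) [Fintype β] [Zero β] :
    Nat.card {v : β // v ≠ 0} = Fintype.card β - 1 := by
  have h1 : Nat.card {v : β // v ≠ 0} = ({0}ᶜ : Set β).ncard := by
    rw [← Nat.card_coe_set_eq]; rfl
  rw [h1, compl_eq_univ_diff,
    ncard_diff (singleton_subset_iff.2 (mem_univ 0)) (finite_singleton 0),
    ncard_univ, ncard_singleton, Nat.card_eq_fintype_card]

lemma contr_ground (P : Matroid α) (C : Set α) : (contr P C).E = P.E \ C := rfl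

lemma del_ground (P : Matroid α) (D : Set α) : (del P D).E = P.E \ D := rfl

lemma contr_singleton_indep_iff {P : Matroid α} {e : α} (he : P.Indep {e}) {I : Set α} :
    (contr P {e}).Indep I ↔ e ∉ I ∧ P.Indep (insert e I) := by
  have heE : e ∈ P.E := he.subset_ground rfl
  have hSE : P.E \ {e} ⊆ P✶.E := by rw [dual_ground]; exact diff_subset
  constructor
  · intro hI
    obtain ⟨hIE, B, hB, hdj⟩ := (dual_indep_iff_exists').1 hI
    have hIE' : I ⊆ P.E \ {e} := hIE
    have hBbasis : P✶.IsBasis B (P.E \ {e}) := (isBase_restrict_iff hSE).1 hB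
    have hsp : P✶.Spanning (P.E \ {e}) := by
      rw [spanning_iff_compl_coindep hSE]
      have h1 : P✶.E \ (P.E \ {e}) = {e} := by
        rw [dual_ground]
        exact diff_diff_cancel_left (singleton_subset_iff.2 heE)
      rw [h1, coindep_def, dual_dual]
      exact he
    have hBbase : P✶.IsBase B := hBbasis.indep.isBase_of_spanning
      ⟨by rw [hBbasis.closure_eq_closure, hsp.closure_eq], hBbasis.indep.subset_ground⟩
    have hPB : P.IsBase (P.E \ B) := hBbase.compl_isBase_of_dual
    have hsub : insert e I ⊆ P.E \ B := by
      refine insert_subset ⟨heE, fun heB => (hBbasis.subset heB).2 rfl⟩ ?_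
      exact fun x hx => ⟨(hIE' hx).1, fun hxB => (hdj.ne_of_mem hx hxB) rfl⟩
    exact ⟨fun heI => (hIE' heI).2 rfl, hPB.indep.subset hsub⟩
  · rintro ⟨heI, hind⟩
    obtain ⟨B0, hB0, hIB0⟩ := hind.exists_isBase_superset
    have heB0 : e ∈ B0 := hIB0 (mem_insert _ _)
    refine (dual_indep_iff_exists').2 ⟨?_, P.E \ B0, ?_, ?_⟩
    · exact fun x hx => show x ∈ P.E \ {e} from
        ⟨hind.subset_ground (mem_insert_of_mem _ hx), fun h => heI (h ▸ hx)⟩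
    · rw [isBase_restrict_iff hSE]
      exact IsBase.isBasis_of_subset hSE (hB0.compl_isBase_dual)
        (diff_subset_diff_right (singleton_subset_iff.2 heB0))
    · exact Disjoint.mono_left ((subset_insert e I).trans hIB0) disjoint_sdiff_right

lemma indep_encard_le_of_subset_closure {P : Matroid α} {I J : Set α}
    (hI : P.Indep I) (hJ : P.Indep J) (hIJ : I ⊆ P.closure J) : I.encard ≤ J.encard := by
  obtain ⟨I', hI', hII'⟩ := hI.subset_isBasis_of_subset hIJ (P.closure_subset_ground J)
  calc I.encard ≤ I'.encard := encard_le_encard hII'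
    _ = J.encard := hI'.encard_eq_encard hJ.isBasis_closure

lemma indep_ncard_le_rank {P : Matroid α} (hfin : P.E.Finite) {I : Set α} (hI : P.Indep I) :
    I.ncard ≤ rank P :=
  le_csSup ⟨P.E.ncard, by rintro n ⟨J, hJ, hJE, rfl⟩; exact ncard_le_ncard hJE hfin⟩
    ⟨I, hI, hI.subset_ground, rfl⟩

theorem stmt0 {α : Type*} (q : ℕ) (F : Type*) [Field F] [Fintype F]
    (hq : Fintype.card F = q)
    (P : Matroid α) (hfin : P.E.Finite) (hsimple : Simple P) (hrank : rank P = 3)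
    (e : α) (he : e ∈ P.E) (hPG : IsProjGeom (del P {e}) 3 F) :
    HasUniformMinor P 2 (q ^ 2 + 1) := by
  classical
  obtain ⟨φ, hrep, hne, hnp, hcov⟩ := hPG
  obtain ⟨k, hk⟩ : ∃ k, q ^ 2 = k := ⟨_, rfl⟩
  set S : Set α := P.E \ {e} with hSdef
  have hSsub : S ⊆ P.E := diff_subset
  have hSfin : S.Finite := hfin.subset hSsub
  have heS : e ∉ S := fun h => h.2 rfl
  have hQE : (del P {e}).E = S := rfl
  rw [hQE] at hne hnp hcov
  have h2q : 2 ≤ q := hq ▸ Fintype.one_lt_card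
  -- basic independence facts
  have hsingle : ∀ a ∈ P.E, P.Indep {a} := fun a ha =>
    hsimple {a} (singleton_subset_iff.2 ha) (by simp)
  have hpairE : ∀ a ∈ P.E, ∀ b ∈ P.E, P.Indep {a, b} := by
    intro a ha b hb
    refine hsimple {a, b} (insert_subset ha (singleton_subset_iff.2 hb)) ?_
    exact (ncard_insert_le a {b}).trans (by simp)
  have hcard3 : ∀ I, P.Indep I → I.ncard ≤ 3 := fun I hI =>
    hrank ▸ indep_ncard_le_rank hfin hI
  have hinj : InjOn φ S := by
    intro a ha b hb hab
    by_contra hne2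
    exact hnp a ha b hb hne2 1 (by simpa using hab.symm)
  have hrep' : ∀ I, I ⊆ S → (P.Indep I ↔ LinearIndependent F (fun x : I => φ x.1)) := by
    intro I hIS
    rw [← hrep I hIS]
    exact ⟨fun h => restrict_indep_iff.2 ⟨h, hIS⟩, fun h => (restrict_indep_iff.1 h).1⟩
  -- pair of distinct points of S gives linearly independent vectors
  have hpairLI : ∀ b ∈ S, ∀ c ∈ S, b ≠ c →
      LinearIndependent F ((↑) : ({φ b, φ c} : Set (Fin 3 → F)) → (Fin 3 → F)) :=
    fun b hb c hc hbc =>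
      linearIndepOn_id_pair (hne b hb) (fun a h => hnp b hb c hc hbc a h.symm)
  -- dependence of a triple in S versus span membership
  have hsetdep : ∀ a b c : α, a ∈ S → b ∈ S → c ∈ S → a ≠ b → a ≠ c → b ≠ c →
      (P.Indep {a, b, c} ↔ φ a ∉ Submodule.span F {φ b, φ c}) := by
    intro a b c ha hb hc hab hac hbc
    have hsub : ({a, b, c} : Set α) ⊆ S := by
      intro x hx
      rcases hx with rfl | rfl | rfl <;> assumption
    rw [hrep' _ hsub]
    show LinearIndepOn F φ _ ↔ _
    rw [linearIndepOn_iff_image (hinj.mono hsub)]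
    have himg : φ '' ({a, b, c} : Set α) = insert (φ a) {φ b, φ c} := by
      rw [image_insert_eq, image_insert_eq, image_singleton]
    have hnm : φ a ∉ ({φ b, φ c} : Set (Fin 3 → F)) := by
      intro h
      rcases h with h | h
      · exact hab (hinj ha hb h)
      · exact hac (hinj ha hc h)
    rw [himg, linearIndepOn_id_insert hnm,
      and_iff_right (show LinearIndepOn F id {φ b, φ c} from hpairLI b hb c hc hbc)]
  -- membership in closure of a pair from a dependency
  have hclpair : ∀ a b z : α, a ∈ S → b ∈ S → z ∈ P.E →
      ¬P.Indep (insert z {a, b}) → z ∈ P.closure {a, b} := by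
    intro a b z ha hb hz hdep
    have hI : P.Indep {a, b} := hpairE a (hSsub ha) b (hSsub hb)
    rw [hI.mem_closure_iff']
    exact ⟨hz, fun h => (hdep h).elim⟩
  -- an independent triple cannot lie in the closure of a pair
  have h3in2 : ∀ x y z a b : α, P.Indep {x, y, z} → x ≠ y → x ≠ z → y ≠ z →
      ({x, y, z} : Set α) ⊆ P.closure {a, b} → P.Indep {a, b} → False := by
    intro x y z a b hI hxy hxz hyz hsub hab
    have hle := indep_encard_le_of_subset_closure hI hab hsub
    have h1 : ({x, y, z} : Set α).encard = 3 := by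
      rw [encard_insert_of_notMem (by simp [hxy, hxz]), encard_pair hyz]
      rfl
    have h2 : ({a, b} : Set α).encard ≤ 2 :=
      (encard_insert_le _ _).trans (by rw [encard_singleton]; norm_num)
    rw [h1] at hle
    have := hle.trans h2
    norm_num at this
  -- lower bound on the number of points of the projective plane
  have hScard : q ^ 2 + q + 1 ≤ S.ncard := by
    choose p hp c hc using fun (v : {v : Fin 3 → F // v ≠ 0}) => hcov v.1 v.2
    have hcne : ∀ v, c v ≠ 0 := fun v h0 => v.2 (by rw [hc v, h0, zero_smul])
    haveI := hSfin.to_subtype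
    set Ψ : {v : Fin 3 → F // v ≠ 0} → S × {c : F // c ≠ 0} :=
      fun v => (⟨p v, hp v⟩, ⟨c v, hcne v⟩) with hΨ
    have hinjΨ : Function.Injective Ψ := by
      intro v w h
      simp only [hΨ, Prod.mk.injEq, Subtype.mk.injEq] at h
      exact Subtype.ext (by rw [hc v, hc w, h.1, h.2])
    have hle := Nat.card_le_card_of_injective Ψ hinjΨ
    have hL : Nat.card {v : Fin 3 → F // v ≠ 0} = q ^ 3 - 1 := by
      rw [card_ne_zero_subtype, Fintype.card_fun]
      simp [hq]
    have hR : Nat.card (S × {c : F // c ≠ 0}) = S.ncard * (q - 1) := by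
      rw [Nat.card_prod, Nat.card_coe_set_eq, card_ne_zero_subtype, hq]
    rw [hL, hR] at hle
    obtain ⟨m, rfl⟩ : ∃ m, q = m + 2 := ⟨q - 2, by omega⟩
    have e1 : (m + 2) ^ 3 - 1 = (m ^ 2 + 5 * m + 7) * (m + 1) := by
      have h3 : (m + 2) ^ 3 = (m ^ 2 + 5 * m + 7) * (m + 1) + 1 := by ring
      rw [h3, Nat.add_sub_cancel]
    have e2 : m + 2 - 1 = m + 1 := by omega
    rw [e1, e2] at hle
    have := Nat.le_of_mul_le_mul_right hle (by omega : 0 < m + 1)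
    have e3 : (m + 2) ^ 2 + (m + 2) + 1 = m ^ 2 + 5 * m + 7 := by ring
    omega
  -- the assembly step
  have key : ∀ T, T ⊆ S → T.ncard = q ^ 2 + 1 →
      (∀ a ∈ T, ∀ b ∈ T, a ≠ b → P.Indep {e, a, b}) → HasUniformMinor P 2 (q ^ 2 + 1) := by
    intro T hTS hTcard hTgood
    have hTfin := hSfin.subset hTS
    have hdd : (contr P {e}).E \ (S \ T) = T := by
      show (P.E \ {e}) \ (S \ T) = T
      rw [← hSdef]
      exact diff_diff_cancel_left hTS
    have hNE : (del (contr P {e}) (S \ T)).E = T := by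
      show (contr P {e}).E \ (S \ T) = T
      exact hdd
    refine ⟨del (contr P {e}) (S \ T), ⟨{e}, S \ T, rfl⟩, ?_, ?_, ?_⟩
    · rw [hNE]; exact hTfin
    · rw [hNE]; exact hTcard
    · intro I hIE
      rw [hNE] at hIE
      have hIfin : I.Finite := hTfin.subset hIE
      have heI : e ∉ I := fun h => heS (hTS (hIE h))
      have hNI : (del (contr P {e}) (S \ T)).Indep I ↔ e ∉ I ∧ P.Indep (insert e I) := by
        show ((contr P {e}) ↾ _).Indep I ↔ _
        rw [restrict_indep_iff, contr_singleton_indep_iff (hsingle e he),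
          and_iff_left (show I ⊆ (contr P {e}).E \ (S \ T) by rw [hdd]; exact hIE)]
      rw [hNI]
      constructor
      · rintro ⟨-, hind⟩
        by_contra hgt
        have h4 : (insert e I).ncard = I.ncard + 1 := ncard_insert_of_notMem heI hIfin
        have := hcard3 _ hind
        omega
      · intro hle
        refine ⟨heI, ?_⟩
        rcases (by omega : I.ncard = 0 ∨ I.ncard = 1 ∨ I.ncard = 2) with h | h | h
        · rw [(ncard_eq_zero hIfin).1 h]
          simpa using hsingle e he
        · obtain ⟨a, rfl⟩ := ncard_eq_one.1 h
          exact hpairE e he a (hSsub (hTS (hIE rfl)))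
        · obtain ⟨a, b, hab, rfl⟩ := ncard_eq_two.1 h
          exact hTgood a (hIE (mem_insert _ _)) b (hIE (mem_insert_of_mem _ rfl)) hab
  by_cases hall : ∀ f ∈ S, ∀ g ∈ S, f ≠ g → P.Indep {e, f, g}
  · obtain ⟨T, hTS, hTcard⟩ := Set.exists_subset_card_eq
      (show q ^ 2 + 1 ≤ S.ncard by omega)
    exact key T hTS hTcard (fun a ha b hb hab => hall a (hTS ha) b (hTS hb) hab)
  · push_neg at hall
    obtain ⟨f0, hf0, g0, hg0, hfg0, hdep0⟩ := hall
    set W : Submodule F (Fin 3 → F) := Submodule.span F {φ f0, φ g0} with hWdef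
    have hsubcl : ∀ x y : α, x ∈ P.E → y ∈ P.E → ∀ z ∈ ({x, y} : Set α),
        z ∈ P.closure {x, y} := fun x y hx hy z hz =>
      P.subset_closure {x, y} (insert_subset hx (singleton_subset_iff.2 hy)) hz
    have hφ0ne : φ f0 ≠ φ g0 := fun h => hfg0 (hinj hf0 hg0 h)
    have hfr2 : ∀ u w : Fin 3 → F, u ≠ w →
        LinearIndependent F ((↑) : ({u, w} : Set (Fin 3 → F)) → (Fin 3 → F)) →
        Module.finrank F (Submodule.span F ({u, w} : Set (Fin 3 → F))) = 2 := by
      intro u w huw hLI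
      haveI : Fintype ↥({u, w} : Set (Fin 3 → F)) := (Set.toFinite _).fintype
      rw [finrank_span_set_eq_card hLI, ← ncard_eq_toFinset_card', ncard_pair huw]
    have hclaim : ∀ f g : α, f ∈ S → g ∈ S → f ≠ g → ¬P.Indep {e, f, g} → φ f ∈ W := by
      intro f g hf hg hfg hdep
      by_cases hff0 : f = f0
      · rw [hff0]; exact Submodule.subset_span (mem_insert _ _)
      by_cases hfg0' : f = g0
      · rw [hfg0']; exact Submodule.subset_span (mem_insert_of_mem _ rfl)
      have hfE : f ∈ P.E := hSsub hf
      have hφfg : φ f ≠ φ g := fun h => hfg (hinj hf hg h)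
      set W' : Submodule F (Fin 3 → F) := Submodule.span F {φ f, φ g} with hW'def
      have hLI0 := hpairLI f0 hf0 g0 hg0 hfg0
      have hLI1 := hpairLI f hf g hg hfg
      have hex : ∃ v : Fin 3 → F, v ≠ 0 ∧ v ∈ W ⊓ W' := by
        by_contra hcon
        push_neg at hcon
        have hbot : W ⊓ W' = ⊥ := by
          rw [Submodule.eq_bot_iff]
          intro v hv
          by_contra hv0
          exact hcon v hv0 hv
        have hsum := Submodule.finrank_sup_add_finrank_inf_eq W W'
        rw [hbot, finrank_bot, add_zero, hfr2 _ _ hφ0ne hLI0, hfr2 _ _ hφfg hLI1] at hsum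
        have h3 : Module.finrank F ↥(W ⊔ W') ≤ 3 := by
          have h4 := Submodule.finrank_le (W ⊔ W')
          rwa [Module.finrank_fintype_fun_eq_card, Fintype.card_fin] at h4
        omega
      obtain ⟨v, hv0, hvm⟩ := hex
      obtain ⟨hvW, hvW'⟩ := Submodule.mem_inf.1 hvm
      obtain ⟨pp, hpS, cp, hvp⟩ := hcov v hv0
      have hcp0 : cp ≠ 0 := fun h0 => hv0 (by rw [hvp, h0, zero_smul])
      have hφp : φ pp = cp⁻¹ • v := by
        rw [hvp, smul_smul, inv_mul_cancel₀ hcp0, one_smul]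
      have hφpW : φ pp ∈ W := by rw [hφp]; exact W.smul_mem _ hvW
      have hφpW' : φ pp ∈ W' := by rw [hφp]; exact W'.smul_mem _ hvW'
      by_cases hfp : f = pp
      · rw [hfp]; exact hφpW
      have hpcl0 : pp ∈ P.closure {f0, g0} := by
        by_cases hp1 : pp = f0
        · exact hsubcl f0 g0 (hSsub hf0) (hSsub hg0) pp (by rw [hp1]; exact mem_insert _ _)
        by_cases hp2 : pp = g0
        · exact hsubcl f0 g0 (hSsub hf0) (hSsub hg0) pp
            (by rw [hp2]; exact mem_insert_of_mem _ rfl)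
        exact hclpair f0 g0 pp hf0 hg0 (hSsub hpS)
          (fun hI => ((hsetdep pp f0 g0 hpS hf0 hg0 hp1 hp2 hfg0).1 hI) hφpW)
      have hpclf : pp ∈ P.closure {f, g} := by
        by_cases hp1 : pp = f
        · exact hsubcl f g hfE (hSsub hg) pp (by rw [hp1]; exact mem_insert _ _)
        by_cases hp2 : pp = g
        · exact hsubcl f g hfE (hSsub hg) pp (by rw [hp2]; exact mem_insert_of_mem _ rfl)
        exact hclpair f g pp hf hg (hSsub hpS)
          (fun hI => ((hsetdep pp f g hpS hf hg hp1 hp2 hfg).1 hI) hφpW')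
      have hecl0 : e ∈ P.closure {f0, g0} := hclpair f0 g0 e hf0 hg0 he hdep0
      have heclf : e ∈ P.closure {f, g} := hclpair f g e hf hg he hdep
      have hep : P.Indep {e, pp} := hpairE e he pp (hSsub hpS)
      have hepcl : ({e, pp} : Set α) ⊆ P.closure {f0, g0} :=
        insert_subset hecl0 (singleton_subset_iff.2 hpcl0)
      have hfcl : f ∈ P.closure {e, pp} := by
        by_contra hfcl
        obtain ⟨hind, -⟩ := (hep.notMem_closure_iff hfE).1 hfcl
        refine h3in2 f e pp f g hind (fun h => heS (h ▸ hf)) hfp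
          (fun h => heS (h ▸ hpS)) ?_ (hpairE f hfE g (hSsub hg))
        refine insert_subset (hsubcl f g hfE (hSsub hg) f (mem_insert _ _)) ?_
        exact insert_subset heclf (singleton_subset_iff.2 hpclf)
      have hfcl0 : f ∈ P.closure {f0, g0} :=
        P.closure_subset_closure_of_subset_closure hepcl hfcl
      have hI0 : P.Indep {f0, g0} := hpairE f0 (hSsub hf0) g0 (hSsub hg0)
      have hdep3 : ¬P.Indep (insert f {f0, g0}) := by
        intro hI
        rw [hI0.mem_closure_iff'] at hfcl0
        rcases hfcl0.2 hI with h | h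
        · exact hff0 h
        · exact hfg0' h
      by_contra hWn
      exact hdep3 ((hsetdep f f0 g0 hf hf0 hg0 hff0 hfg0' hfg0).2 hWn)
    have hAcard : {a | a ∈ S ∧ φ a ∈ W}.ncard ≤ q + 1 := by
      set A : Set α := {a | a ∈ S ∧ φ a ∈ W} with hA
      haveI : Finite ↥A := (hSfin.subset (fun a ha => ha.1)).to_subtype
      set g : ↥A → Option F := fun a =>
        if h : ∃ t s : F, s ≠ 0 ∧ φ a.1 = s • (φ f0 + t • φ g0) then some h.choose else none
        with hgdef
      have hginj : Function.Injective g := by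
        intro a b hab
        by_cases ha : ∃ t s : F, s ≠ 0 ∧ φ a.1 = s • (φ f0 + t • φ g0)
        · have hb : ∃ t s : F, s ≠ 0 ∧ φ b.1 = s • (φ f0 + t • φ g0) := by
            by_contra hb
            rw [hgdef] at hab
            simp only [dif_pos ha, dif_neg hb] at hab
            cases hab
          rw [hgdef] at hab
          simp only [dif_pos ha, dif_pos hb, Option.some.injEq] at hab
          obtain ⟨s, hs0, hφa⟩ := ha.choose_spec
          obtain ⟨s', hs0', hφb⟩ := hb.choose_spec
          rw [hab] at hφa
          apply Subtype.ext
          by_contra hne2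
          refine hnp a.1 a.2.1 b.1 b.2.1 hne2 (s' * s⁻¹) ?_
          rw [hφb, hφa, smul_smul]
          congr 1
          field_simp
        · have hb : ¬∃ t s : F, s ≠ 0 ∧ φ b.1 = s • (φ f0 + t • φ g0) := by
            intro hb
            rw [hgdef] at hab
            simp only [dif_neg ha, dif_pos hb] at hab
            cases hab
          have hpar : ∀ x : ↥A, ¬(∃ t s : F, s ≠ 0 ∧ φ x.1 = s • (φ f0 + t • φ g0)) →
              ∃ y : F, y ≠ 0 ∧ φ x.1 = y • φ g0 := by
            intro x hx
            obtain ⟨u, w, huw⟩ := Submodule.mem_span_pair.1 x.2.2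
            have hu0 : u = 0 := by
              by_contra hu
              exact hx ⟨u⁻¹ * w, u, hu, by
                rw [smul_add, smul_smul, mul_inv_cancel_left₀ hu]; exact huw.symm⟩
            have hφx : φ x.1 = w • φ g0 := by rw [← huw, hu0, zero_smul, zero_add]
            exact ⟨w, fun h => hne x.1 x.2.1 (by rw [hφx, h, zero_smul]), hφx⟩
          obtain ⟨y, hy0, hya⟩ := hpar a ha
          obtain ⟨y', hy0', hyb⟩ := hpar b hb
          apply Subtype.ext
          by_contra hne2
          refine hnp a.1 a.2.1 b.1 b.2.1 hne2 (y' * y⁻¹) ?_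
          rw [hyb, hya, smul_smul]
          congr 1
          field_simp
      calc A.ncard = Nat.card ↥A := (Nat.card_coe_set_eq A).symm
        _ ≤ Nat.card (Option F) := Nat.card_le_card_of_injective g hginj
        _ = q + 1 := by rw [Nat.card_eq_fintype_card, Fintype.card_option, hq]
    set A : Set α := {a | a ∈ S ∧ φ a ∈ W} with hAdef
    set B : Set α := S \ A with hBdef
    have hASub : A ⊆ S := fun a ha => ha.1
    have hBfin : B.Finite := hSfin.subset diff_subset
    have hf0A : f0 ∈ A := ⟨hf0, Submodule.subset_span (mem_insert _ _)⟩
    have hf0B : f0 ∉ B := fun h => h.2 hf0A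
    have hBcard : S.ncard - A.ncard ≤ B.ncard := by
      rw [hBdef, ncard_diff hASub (hSfin.subset hASub)]
    have hT'card : q ^ 2 + 1 ≤ (insert f0 B).ncard := by
      rw [ncard_insert_of_notMem hf0B hBfin]
      have hA1 : A.ncard ≤ q + 1 := hAcard
      omega
    obtain ⟨T, hTT', hTcard⟩ := Set.exists_subset_card_eq hT'card
    have hT'S : insert f0 B ⊆ S := insert_subset hf0 diff_subset
    refine key T (hTT'.trans hT'S) hTcard ?_
    intro a ha b hb hab
    by_contra hdep
    have haS := hT'S (hTT' ha)
    have hbS := hT'S (hTT' hb)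
    have haW : φ a ∈ W := hclaim a b haS hbS hab hdep
    have hbW : φ b ∈ W := by
      refine hclaim b a hbS haS (Ne.symm hab) ?_
      have hcomm : ({e, a, b} : Set α) = {e, b, a} := by
        rw [Set.pair_comm a b]
      rwa [hcomm] at hdep
    rcases hTT' ha with rfl | haB
    · rcases hTT' hb with rfl | hbB
      · exact hab rfl
      · exact hbB.2 ⟨hbS, hbW⟩
    · exact haB.2 ⟨haS, haW⟩


end Paper
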